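/- A binary relation R ⊆ Σ* × Σ* is synchronous (recognized by a finite synchronous automaton, equivalently regular as a language over the paired alphabet) if and only if it is recognized by a finite synchronous algebra. -/

import Mathlib

/-- Letter-types: `l` for a pair of proper letters, `p` for (letter, padding),
`q` for (padding, letter). -/
inductive LTy | l | p | q
deriving DecidableEq

/-- The five types of (well-formed) synchronous words:
`ll`, `ll→lb` (= `lllb`), `lb`, `ll→bl` (= `llbl`), `bl`. -/
inductive STy | ll | lllb | lb | llbl | bl
deriving DecidableEq

namespace STy

/-- Letter-type of the first letter. -/
def src : STy → LTy
  | ll => .l | lllb => .l | lb => .p | llbl => .l | bl => .q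

/-- Letter-type of the last letter. -/
def tgt : STy → LTy
  | ll => .l | lllb => .p | lb => .p | llbl => .q | bl => .q

/-- `σ = α→β` is compatible with `τ = β'→γ` iff `β = β'` or `β = ll`. -/
def compat (σ τ : STy) : Prop := σ.tgt = τ.src ∨ σ.tgt = LTy.l

/-- Product of compatible types (junk on incompatible pairs). -/
def comp : STy → STy → STy
  | ll, ll => ll
  | ll, lllb => lllb
  | ll, lb => lllb
  | ll, llbl => llbl
  | ll, bl => llbl
  | lllb, _ => lllb
  | lb, _ => lb
  | llbl, _ => llbl
  | bl, _ => bl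

end STy

/-- A synchronous algebra: a `STy`-typed set with a dependency relation and a
partial associative product defined exactly on compatible pairs, monotone with
respect to dependency, with units.  The partial product is modelled as an
`Option`-valued total product. -/
structure SyncAlg where
  A : Type
  ty : A → STy
  dep : A → A → Prop
  mul : A → A → Option A
  dep_refl : ∀ x, dep x x
  dep_symm : ∀ {x y}, dep x y → dep y x
  dep_eq : ∀ {x y}, dep x y → ty x = ty y → x = y
  mul_defined : ∀ x y, (mul x y).isSome ↔ (ty x).compat (ty y)
  ty_mul : ∀ {x y z}, mul x y = some z → ty z = (ty x).comp (ty y)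
  mul_assoc : ∀ x y z,
    (mul x y).bind (fun a => mul a z) = (mul y z).bind (fun b => mul x b)
  dep_mul_left : ∀ {x x' y z z'}, dep x x' →
    mul x y = some z → mul x' y = some z' → dep z z'
  dep_mul_right : ∀ {x x' y z z'}, dep x x' →
    mul y x = some z → mul y x' = some z' → dep z z'
  unit : STy → A
  ty_unit : ∀ τ, ty (unit τ) = τ
  unit_mul : ∀ {τ x z}, mul (unit τ) x = some z → dep z x
  mul_unit : ∀ {τ x z}, mul x (unit τ) = some z → dep z x
  unit_lllb : mul (unit .ll) (unit .lb) = some (unit .lllb)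
  unit_llbl : mul (unit .ll) (unit .bl) = some (unit .llbl)

namespace SyncAlg

/-- A closed subset of a synchronous algebra: saturated under dependency. -/
def Closed (S : SyncAlg) (C : Set S.A) : Prop :=
  ∀ {x y : S.A}, S.dep x y → (x ∈ C ↔ y ∈ C)

/-- Two-sided partial product `x·a·y`. -/
def mul3 (S : SyncAlg) (x a y : S.A) : Option S.A :=
  (S.mul x a).bind fun u => S.mul u y

/-- The syntactic congruence of a subset `C` of a synchronous algebra. -/
def synCong (S : SyncAlg) (C : Set S.A) (a b : S.A) : Prop :=
  (∀ x y u v, S.mul3 x a y = some u → S.mul3 x b y = some v → (u ∈ C ↔ v ∈ C)) ∧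
  (∀ x u v, S.mul x a = some u → S.mul x b = some v → (u ∈ C ↔ v ∈ C)) ∧
  (∀ y u v, S.mul a y = some u → S.mul b y = some v → (u ∈ C ↔ v ∈ C))

/-- Left residual `x⁻¹C` of a closed subset `C` by an element `x`. -/
def lres (S : SyncAlg) (x : S.A) (C : Set S.A) : Set S.A :=
  { y | ∃ y' u, S.synCong C y' y ∧ S.mul x y' = some u ∧ u ∈ C }

/-- Right residual `C·x⁻¹` of a closed subset `C` by an element `x`. -/
def rres (S : SyncAlg) (x : S.A) (C : Set S.A) : Set S.A :=
  { y | ∃ y' u, S.synCong C y' y ∧ S.mul y' x = some u ∧ u ∈ C }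

end SyncAlg

/-- Morphisms of synchronous algebras: preserve types, units, product and
dependency. -/
structure SyncHom (S T : SyncAlg) where
  toFun : S.A → T.A
  map_ty : ∀ x, T.ty (toFun x) = S.ty x
  map_unit : ∀ τ, toFun (S.unit τ) = T.unit τ
  map_mul : ∀ {x y z}, S.mul x y = some z →
    T.mul (toFun x) (toFun y) = some (toFun z)
  map_dep : ∀ {x y}, S.dep x y → T.dep (toFun x) (toFun y)
/-- Synchronous words over an alphabet `α`, organized by their five types. -/
inductive SyncW (α : Type) : Type
  | wll : List (α × α) → SyncW α
  | wlllb : List (α × α) → List α → SyncW α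
  | wlb : List α → SyncW α
  | wllbl : List (α × α) → List α → SyncW α
  | wbl : List α → SyncW α

namespace SyncW

variable {α : Type}

/-- The type of a synchronous word. -/
def ty : SyncW α → STy
  | wll _ => .ll | wlllb _ _ => .lllb | wlb _ => .lb | wllbl _ _ => .llbl | wbl _ => .bl

/-- Base identifications of the dependency relation on synchronous words. -/
inductive dep0 : SyncW α → SyncW α → Prop
  | ll_lllb (w : List (α × α)) : dep0 (wll w) (wlllb w [])
  | ll_llbl (w : List (α × α)) : dep0 (wll w) (wllbl w [])
  | lb_lllb (s : List α) : dep0 (wlb s) (wlllb [] s)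
  | bl_llbl (s : List α) : dep0 (wbl s) (wllbl [] s)

/-- The dependency relation: reflexive-symmetric closure of `dep0`. -/
def dep (x y : SyncW α) : Prop := x = y ∨ dep0 x y ∨ dep0 y x

/-- Concatenation of synchronous words (partial). -/
def mul : SyncW α → SyncW α → Option (SyncW α)
  | wll w, wll w' => some (wll (w ++ w'))
  | wll w, wlllb w' s => some (wlllb (w ++ w') s)
  | wll w, wlb s => some (wlllb w s)
  | wll w, wllbl w' s => some (wllbl (w ++ w') s)
  | wll w, wbl s => some (wllbl w s)
  | wlllb w s, wlb s' => some (wlllb w (s ++ s'))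
  | wlb s, wlb s' => some (wlb (s ++ s'))
  | wllbl w s, wbl s' => some (wllbl w (s ++ s'))
  | wbl s, wbl s' => some (wbl (s ++ s'))
  | _, _ => none

/-- Decoding into the pair of words represented. -/
def decode : SyncW α → List α × List α
  | wll w => (w.map Prod.fst, w.map Prod.snd)
  | wlllb w s => (w.map Prod.fst ++ s, w.map Prod.snd)
  | wlb s => (s, [])
  | wllbl w s => (w.map Prod.fst, w.map Prod.snd ++ s)
  | wbl s => ([], s)

end SyncW

set_option maxHeartbeats 2000000 in
/-- The free synchronous algebra `Sync(α)` of synchronous words over `α`. -/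
def freeSync (α : Type) : SyncAlg where
  A := SyncW α
  ty := SyncW.ty
  dep := SyncW.dep
  mul := SyncW.mul
  dep_refl x := Or.inl rfl
  dep_symm h := by
    rcases h with rfl | h | h
    · exact Or.inl rfl
    · exact Or.inr (Or.inr h)
    · exact Or.inr (Or.inl h)
  dep_eq := by
    rintro x y (rfl | h | h) hty <;> first
      | rfl
      | (cases h <;> simp [SyncW.ty] at hty)
  mul_defined x y := by
    cases x <;> cases y <;>
      simp [SyncW.mul, SyncW.ty, STy.compat, STy.tgt, STy.src]
  ty_mul := by
    intro x y z h
    cases x <;> cases y <;>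
      simp [SyncW.mul] at h <;> subst h <;> rfl
  mul_assoc x y z := by
    cases x <;> cases y <;> cases z <;>
      simp [SyncW.mul, List.append_assoc]
  dep_mul_left := by
    intro x x' y z z' h h1 h2
    rcases h with rfl | h | h
    · rw [h1] at h2; injection h2 with h2; rw [h2]; exact Or.inl rfl
    · cases h <;> cases y <;>
        simp [SyncW.mul] at h1 h2 <;> subst h1 <;> subst h2 <;>
        first
          | exact Or.inl rfl
          | exact Or.inr (Or.inl (by constructor))
          | exact Or.inr (Or.inr (by constructor))
    · cases h <;> cases y <;>
        simp [SyncW.mul] at h1 h2 <;> subst h1 <;> subst h2 <;>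
        first
          | exact Or.inl rfl
          | exact Or.inr (Or.inl (by constructor))
          | exact Or.inr (Or.inr (by constructor))
  dep_mul_right := by
    intro x x' y z z' h h1 h2
    rcases h with rfl | h | h
    · rw [h1] at h2; injection h2 with h2; rw [h2]; exact Or.inl rfl
    · cases h <;> cases y <;>
        simp [SyncW.mul] at h1 h2 <;> subst h1 <;> subst h2 <;>
        first
          | exact Or.inl rfl
          | exact Or.inr (Or.inl (by constructor))
          | exact Or.inr (Or.inr (by constructor))
    · cases h <;> cases y <;>
        simp [SyncW.mul] at h1 h2 <;> subst h1 <;> subst h2 <;>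
        first
          | exact Or.inl rfl
          | exact Or.inr (Or.inl (by constructor))
          | exact Or.inr (Or.inr (by constructor))
  unit := fun τ => match τ with
    | .ll => .wll []
    | .lllb => .wlllb [] []
    | .lb => .wlb []
    | .llbl => .wllbl [] []
    | .bl => .wbl []
  ty_unit τ := by cases τ <;> rfl
  unit_mul := by
    intro τ x z h
    cases τ <;> cases x <;> simp [SyncW.mul] at h <;> subst h <;>
      first
        | exact Or.inl rfl
        | exact Or.inr (Or.inl (by constructor))
        | exact Or.inr (Or.inr (by constructor))
  mul_unit := by
    intro τ x z h
    cases τ <;> cases x <;> simp [SyncW.mul] at h <;> subst h <;>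
      first
        | exact Or.inl rfl
        | exact Or.inr (Or.inl (by constructor))
        | exact Or.inr (Or.inr (by constructor))
  unit_lllb := rfl
  unit_llbl := rfl

/-- The closed subset of `Sync(α)` induced by a relation `R ⊆ α* × α*`. -/
def projS {α : Type} (R : Set (List α × List α)) : Set (SyncW α) :=
  { x | x.decode ∈ R }

/-- `⟨φ, B, Acc⟩` recognizes the relation `R` when `Acc` is closed and
`proj R = φ⁻¹[Acc]`. -/
def RecognizesRel {α : Type} (B : SyncAlg) (φ : SyncHom (freeSync α) B)
    (Acc : Set B.A) (R : Set (List α × List α)) : Prop :=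
  B.Closed Acc ∧ projS R = φ.toFun ⁻¹' Acc

/-- The paired alphabet `Σ₂⊥ = (Σ×Σ) ⊕ (Σ×{⊥}) ⊕ ({⊥}×Σ)`. -/
def PL (α : Type) : Type := (α × α) ⊕ α ⊕ α

attribute [reducible] PL

/-- A word over `Σ₂⊥` is well-formed when padding symbols are placed
consistently: a block of letter-pairs followed by a block of padded letters on
a single side. -/
def WF {α : Type} (l : List (PL α)) : Prop :=
  ∃ (w : List (α × α)) (s : List α),
    l = w.map Sum.inl ++ s.map (fun a => Sum.inr (Sum.inl a)) ∨
    l = w.map Sum.inl ++ s.map (fun a => Sum.inr (Sum.inr a))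

/-- Decode a word over `Σ₂⊥` into the pair of words it represents
(stripping padding symbols). -/
def decodeW {α : Type} (l : List (PL α)) : List α × List α :=
  (l.filterMap (fun x => match x with
      | Sum.inl p => some p.1
      | Sum.inr (Sum.inl a) => some a
      | Sum.inr (Sum.inr _) => none),
   l.filterMap (fun x => match x with
      | Sum.inl p => some p.2
      | Sum.inr (Sum.inl _) => none
      | Sum.inr (Sum.inr a) => some a))

/-- The language over `Σ₂⊥` corresponding to a relation `R ⊆ α* × α*`:
well-formed words whose decoded pair lies in `R`. -/
def langOf {α : Type} (R : Set (List α × List α)) : Language (PL α) :=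
  { l | WF l ∧ decodeW l ∈ R }

namespace SyncProof

instance : Fintype STy where
  elems := {.ll, .lllb, .lb, .llbl, .bl}
  complete := by intro x; cases x <;> decide

instance : Fintype LTy where
  elems := {.l, .p, .q}
  complete := by intro x; cases x <;> decide

instance (σ τ : STy) : Decidable (σ.compat τ) :=
  inferInstanceAs (Decidable (_ ∨ _))

lemma comp_assoc : ∀ σ τ ρ : STy, (σ.comp τ).comp ρ = σ.comp (τ.comp ρ) := by decide

lemma compat_comp_left : ∀ σ τ ρ : STy, σ.compat τ →
    ((σ.comp τ).compat ρ ↔ τ.compat ρ) := by decide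

lemma compat_comp_right : ∀ σ τ ρ : STy, τ.compat ρ →
    (σ.compat (τ.comp ρ) ↔ σ.compat τ) := by decide

end SyncProof

namespace SyncProof

variable {α : Type}

/-- The synchronous algebra induced by a DFA over the paired alphabet. -/
def dfaAlg (σ : Type) : SyncAlg where
  A := STy × (σ → σ)
  ty := Prod.fst
  dep x y := x.2 = y.2
  mul x y := if x.1.compat y.1 then some (x.1.comp y.1, y.2 ∘ x.2) else none
  dep_refl _ := rfl
  dep_symm h := h.symm
  dep_eq h h' := Prod.ext h' h
  mul_defined x y := by
    by_cases h : x.1.compat y.1 <;> simp [h]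
  ty_mul := by
    intro x y z h
    by_cases hc : x.1.compat y.1 <;> simp [hc] at h
    rw [← h]
  mul_assoc := by
    intro x y z
    by_cases h1 : x.1.compat y.1 <;> by_cases h2 : y.1.compat z.1 <;>
      simp only [h1, h2, if_pos, if_neg, Option.bind_none, Option.bind_some,
        if_true, if_false]
    · rw [if_pos ((compat_comp_left _ _ _ h1).mpr h2),
        if_pos ((compat_comp_right _ _ _ h2).mpr h1)]
      simp [comp_assoc, Function.comp_assoc]
    · rw [if_neg (fun h => h2 ((compat_comp_left _ _ _ h1).mp h))]
    · rw [if_neg (fun h => h1 ((compat_comp_right _ _ _ h2).mp h))]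
  dep_mul_left := by
    intro x x' y z z' h h1 h2
    by_cases hc : x.1.compat y.1 <;> by_cases hc' : x'.1.compat y.1 <;>
      simp [hc, hc'] at h1 h2
    rw [← h1, ← h2, h]
  dep_mul_right := by
    intro x x' y z z' h h1 h2
    by_cases hc : y.1.compat x.1 <;> by_cases hc' : y.1.compat x'.1 <;>
      simp [hc, hc'] at h1 h2
    rw [← h1, ← h2, h]
  unit τ := (τ, id)
  ty_unit _ := rfl
  unit_mul := by
    intro τ x z h
    by_cases hc : τ.compat x.1 <;> simp [hc] at h
    rw [← h]
  mul_unit := by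
    intro τ x z h
    by_cases hc : x.1.compat τ <;> simp [hc] at h
    rw [← h]
  unit_lllb := by
    show (if STy.compat .ll .lb then _ else none) = _
    rw [if_pos (by decide)]; rfl
  unit_llbl := by
    show (if STy.compat .ll .bl then _ else none) = _
    rw [if_pos (by decide)]; rfl

end SyncProof

namespace SyncProof

variable {α : Type}

/-- Encoding of a synchronous word as a word over the paired alphabet. -/
def encW : SyncW α → List (PL α)
  | .wll w => w.map Sum.inl
  | .wlllb w s => w.map Sum.inl ++ s.map (fun a => Sum.inr (Sum.inl a))
  | .wlb s => s.map (fun a => Sum.inr (Sum.inl a))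
  | .wllbl w s => w.map Sum.inl ++ s.map (fun a => Sum.inr (Sum.inr a))
  | .wbl s => s.map (fun a => Sum.inr (Sum.inr a))

lemma wf_encW (x : SyncW α) : WF (encW x) := by
  cases x with
  | wll w => exact ⟨w, [], Or.inl (by simp [encW])⟩
  | wlllb w s => exact ⟨w, s, Or.inl rfl⟩
  | wlb s => exact ⟨[], s, Or.inl (by simp [encW])⟩
  | wllbl w s => exact ⟨w, s, Or.inr rfl⟩
  | wbl s => exact ⟨[], s, Or.inr (by simp [encW])⟩

lemma filterMap_some_comp {β γ : Type} (f : β → γ) (l : List β) :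
    l.filterMap (fun x => some (f x)) = l.map f := by
  induction l with
  | nil => rfl
  | cons a l ih => simp [List.filterMap_cons, ih]

lemma filterMap_none' {β γ : Type} (l : List β) :
    l.filterMap (fun _ => (none : Option γ)) = [] := by
  induction l with
  | nil => rfl
  | cons a l ih => simp [List.filterMap_cons, ih]

lemma decodeW_encW (x : SyncW α) : decodeW (encW x) = x.decode := by
  cases x <;>
    simp [decodeW, encW, SyncW.decode, List.filterMap_append, List.filterMap_map,
      Function.comp_def, filterMap_some_comp, filterMap_none']

lemma encW_mul {x y z : SyncW α} (h : SyncW.mul x y = some z) :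
    encW z = encW x ++ encW y := by
  cases x <;> cases y <;> simp [SyncW.mul] at h <;> subst h <;>
    simp [encW, List.append_assoc]

/-- The morphism from the free synchronous algebra to the DFA-induced algebra. -/
def dfaHom (σ : Type) (M : DFA (PL α) σ) : SyncHom (freeSync α) (dfaAlg σ) where
  toFun x := (SyncW.ty x, fun st => M.evalFrom st (encW x))
  map_ty _ := rfl
  map_unit τ := by
    cases τ <;>
      exact congrArg (Prod.mk _) (funext fun st => rfl)
  map_mul := by
    intro x y z h
    have hc : (SyncW.ty x).compat (SyncW.ty y) :=
      ((freeSync α).mul_defined x y).mp (by rw [h]; rfl)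
    show (if _ then _ else none) = _
    rw [if_pos hc]
    refine congrArg some (Prod.ext ?_ ?_)
    · exact ((freeSync α).ty_mul h).symm
    · funext st
      show M.evalFrom (M.evalFrom st (encW x)) (encW y) = M.evalFrom st (encW z)
      rw [encW_mul h, M.evalFrom_of_append]
  map_dep := by
    intro x y h
    have : encW x = encW y := by
      rcases h with rfl | h | h
      · rfl
      · cases h <;> simp [encW]
      · cases h <;> simp [encW]
    show (fun st => M.evalFrom st (encW x)) = fun st => M.evalFrom st (encW y)
    rw [this]

end SyncProof

namespace SyncProof

variable {α : Type}

/-- The single-letter synchronous word. -/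
def atom : PL α → SyncW α
  | Sum.inl p => .wll [p]
  | Sum.inr (Sum.inl a) => .wlb [a]
  | Sum.inr (Sum.inr a) => .wbl [a]

/-- Canonical synchronous words: padded blocks are nonempty whenever possible. -/
def canon : SyncW α → Prop
  | .wll _ => True
  | .wlb s => s ≠ []
  | .wbl s => s ≠ []
  | .wlllb w s => w ≠ [] ∧ s ≠ []
  | .wllbl w s => w ≠ [] ∧ s ≠ []

lemma canon_atom (c : PL α) : canon (atom c) := by
  rcases c with p | a | a <;> simp [atom, canon]

lemma encW_atom (c : PL α) : encW (atom c) = [c] := by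
  rcases c with p | a | a <;> rfl

lemma mul_atom_canon {x x' : SyncW α} {c : PL α} (hx : canon x) (hne : encW x ≠ [])
    (h : SyncW.mul x (atom c) = some x') : canon x' := by
  rcases c with p | a | a <;>
    cases x <;> simp [SyncW.mul, atom] at h <;> subst h <;>
    simp_all [canon, encW]

/-- A pair letter. -/
def inlp (p : α × α) : PL α := Sum.inl p

/-- Left padding letter. -/
def padL (a : α) : PL α := Sum.inr (Sum.inl a)

/-- Right padding letter. -/
def padR (a : α) : PL α := Sum.inr (Sum.inr a)

lemma mem_pad_case {m₂ : List (PL α)} {d : PL α} {f : α → PL α} {s : List α}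
    (h2 : d :: m₂ = s.map f) : ∀ c ∈ m₂, ∃ b, c = f b := by
  intro c hc
  have : c ∈ s.map f := by rw [← h2]; exact List.mem_cons_of_mem _ hc
  obtain ⟨b, -, hb⟩ := List.mem_map.mp this
  exact ⟨b, hb.symm⟩

lemma wf_after_pad_aux {m₁ m₂ : List (PL α)} {d : PL α} {f : α → PL α}
    {w : List (α × α)} {s : List α}
    (h : m₁ ++ d :: m₂ = List.append (w.map fun p => Sum.inl p) (s.map f))
    (hd : ∀ p : α × α, d ≠ Sum.inl p) :
    ∀ c ∈ m₂, ∃ b, c = f b := by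
  rw [List.append_eq, List.append_eq_append_iff] at h
  rcases h with ⟨a', h1, h2⟩ | ⟨c', h1, h2⟩
  · cases a' with
    | nil =>
      rw [List.nil_append] at h2
      exact mem_pad_case h2
    | cons x a'' =>
      exfalso
      obtain ⟨hx, -⟩ := List.cons.inj h2
      have : x ∈ w.map (Sum.inl : α × α → PL α) := by rw [h1]; simp
      obtain ⟨p, -, hp⟩ := List.mem_map.mp this
      exact hd p (hx ▸ hp.symm)
  · intro c hc
    have : c ∈ s.map f := by
      rw [h2]
      simp [hc]
    obtain ⟨b, -, hb⟩ := List.mem_map.mp this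
    exact ⟨b, hb.symm⟩

lemma wf_after_padL {m₁ m₂ : List (PL α)} {a : α}
    (h : WF (m₁ ++ padL a :: m₂)) :
    ∀ c ∈ m₂, ∃ b, c = padL b := by
  obtain ⟨w, s, h | h⟩ := h
  · exact wf_after_pad_aux h (fun p hp => by simp [padL] at hp)
  · exfalso
    have hm : padL a ∈ m₁ ++ padL a :: m₂ := by simp
    rw [h] at hm
    rcases List.mem_append.mp hm with hm' | hm'
    · obtain ⟨b, -, hb⟩ := List.mem_map.mp hm'
      injection hb
    · obtain ⟨b, -, hb⟩ := List.mem_map.mp hm'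
      injection hb with hb'
      injection hb'

lemma wf_after_padR {m₁ m₂ : List (PL α)} {a : α}
    (h : WF (m₁ ++ padR a :: m₂)) :
    ∀ c ∈ m₂, ∃ b, c = padR b := by
  obtain ⟨w, s, h | h⟩ := h
  · exfalso
    have hm : padR a ∈ m₁ ++ padR a :: m₂ := by simp
    rw [h] at hm
    rcases List.mem_append.mp hm with hm' | hm'
    · obtain ⟨b, -, hb⟩ := List.mem_map.mp hm'
      injection hb
    · obtain ⟨b, -, hb⟩ := List.mem_map.mp hm'
      injection hb with hb'
      injection hb'
  · exact wf_after_pad_aux h (fun p hp => by simp [padR] at hp)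

end SyncProof

namespace SyncProof

variable {α : Type}

lemma wf_extend {x : SyncW α} {c : PL α} (hx : canon x)
    (h : WF (encW x ++ [c])) : (SyncW.mul x (atom c)).isSome := by
  cases x with
  | wll w => rcases c with p | a | a <;> simp [SyncW.mul, atom]
  | wlb s =>
    obtain ⟨a, s', rfl⟩ : ∃ a s', s = a :: s' := by
      cases s with
      | nil => exact absurd rfl hx
      | cons a s' => exact ⟨a, s', rfl⟩
    have h' : WF (([] : List (PL α)) ++ padL a :: (s'.map padL ++ [c])) := by
      exact h
    obtain ⟨b, rfl⟩ := wf_after_padL h' c (by simp)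
    simp [SyncW.mul, atom, padL]
  | wbl s =>
    obtain ⟨a, s', rfl⟩ : ∃ a s', s = a :: s' := by
      cases s with
      | nil => exact absurd rfl hx
      | cons a s' => exact ⟨a, s', rfl⟩
    have h' : WF (([] : List (PL α)) ++ padR a :: (s'.map padR ++ [c])) := by
      exact h
    obtain ⟨b, rfl⟩ := wf_after_padR h' c (by simp)
    simp [SyncW.mul, atom, padR]
  | wlllb w s =>
    obtain ⟨a, s', rfl⟩ : ∃ a s', s = a :: s' := by
      cases s with
      | nil => exact absurd rfl hx.2
      | cons a s' => exact ⟨a, s', rfl⟩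
    have h' : WF (w.map inlp ++ padL a :: (s'.map padL ++ [c])) := by
      simp only [encW, List.map_cons, List.append_assoc, List.cons_append] at h
      exact h
    obtain ⟨b, rfl⟩ := wf_after_padL h' c (by simp)
    simp [SyncW.mul, atom, padL]
  | wllbl w s =>
    obtain ⟨a, s', rfl⟩ : ∃ a s', s = a :: s' := by
      cases s with
      | nil => exact absurd rfl hx.2
      | cons a s' => exact ⟨a, s', rfl⟩
    have h' : WF (w.map inlp ++ padR a :: (s'.map padR ++ [c])) := by
      simp only [encW, List.map_cons, List.append_assoc, List.cons_append] at h
      exact h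
    obtain ⟨b, rfl⟩ := wf_after_padR h' c (by simp)
    simp [SyncW.mul, atom, padR]

lemma wf_prefix_concat {l : List (PL α)} {c : PL α} (h : WF (l ++ [c])) : WF l := by
  obtain ⟨w, s, h | h⟩ := h
  · rcases s.eq_nil_or_concat with rfl | ⟨s₀, a, rfl⟩
    · rcases w.eq_nil_or_concat with rfl | ⟨w₀, p, rfl⟩
      · simp at h
      · refine ⟨w₀, [], Or.inl ?_⟩
        have := congrArg List.dropLast h
        simpa using this
    · refine ⟨w, s₀, Or.inl ?_⟩
      have := congrArg List.dropLast h
      simpa [List.dropLast_concat] using this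
  · rcases s.eq_nil_or_concat with rfl | ⟨s₀, a, rfl⟩
    · rcases w.eq_nil_or_concat with rfl | ⟨w₀, p, rfl⟩
      · simp at h
      · refine ⟨w₀, [], Or.inl ?_⟩
        have := congrArg List.dropLast h
        simpa using this
    · refine ⟨w, s₀, Or.inr ?_⟩
      have := congrArg List.dropLast h
      simpa [List.dropLast_concat] using this

end SyncProof

namespace SyncProof

variable {α : Type}

/-- The DFA induced by a synchronous algebra morphism and accepting set. -/
def algDFA (B : SyncAlg) (φ : SyncHom (freeSync α) B) (Acc : Set B.A)
    (R : Set (List α × List α)) : DFA (PL α) (Option (Option B.A)) where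
  step s c :=
    match s with
    | none => none
    | some none => some (some (φ.toFun (atom c)))
    | some (some b) => (B.mul b (φ.toFun (atom c))).map some
  start := some none
  accept := {s | (∃ b, s = some (some b) ∧ b ∈ Acc) ∨ (s = some none ∧ ([], []) ∈ R)}

lemma algDFA_key (B : SyncAlg) (φ : SyncHom (freeSync α) B) (Acc : Set B.A)
    (R : Set (List α × List α)) :
    ∀ l : List (PL α), l ≠ [] →
      (∃ x : SyncW α, canon x ∧ encW x = l ∧
        (algDFA B φ Acc R).eval l = some (some (φ.toFun x))) ∨
      (¬ WF l ∧ (algDFA B φ Acc R).eval l = none) := by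
  intro l
  induction l using List.reverseRecOn with
  | nil => intro h; exact absurd rfl h
  | append_singleton l c ih =>
    intro _
    rcases eq_or_ne l [] with rfl | hl
    · left
      exact ⟨atom c, canon_atom c, encW_atom c, rfl⟩
    · have heval : (algDFA B φ Acc R).eval (l ++ [c]) =
          (algDFA B φ Acc R).step ((algDFA B φ Acc R).eval l) c :=
        DFA.eval_append_singleton _ _ _
      rcases ih hl with ⟨x, hcx, hex, hev⟩ | ⟨hwf, hev⟩
      · rw [hev] at heval
        by_cases hd : (SyncW.mul x (atom c)).isSome
        · obtain ⟨x', hx'⟩ := Option.isSome_iff_exists.mp hd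
          have hmm : B.mul (φ.toFun x) (φ.toFun (atom c)) = some (φ.toFun x') :=
            φ.map_mul hx'
          left
          refine ⟨x', mul_atom_canon hcx (by rw [hex]; exact hl) hx', ?_, ?_⟩
          · rw [encW_mul hx', hex, encW_atom]
          · rw [heval]
            show (B.mul (φ.toFun x) (φ.toFun (atom c))).map some = _
            rw [hmm]
            rfl
        · right
          constructor
          · intro hwf
            exact hd (wf_extend hcx (by rw [hex]; exact hwf))
          · have hnone : B.mul (φ.toFun x) (φ.toFun (atom c)) = none := by
              rw [← Option.not_isSome_iff_eq_none]
              intro hs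
              apply hd
              have := (B.mul_defined (φ.toFun x) (φ.toFun (atom c))).mp hs
              rw [φ.map_ty x, φ.map_ty (atom c)] at this
              exact ((freeSync α).mul_defined x (atom c)).mpr this
            rw [heval]
            show (B.mul (φ.toFun x) (φ.toFun (atom c))).map some = none
            rw [hnone]
            rfl
      · right
        refine ⟨fun h => hwf (wf_prefix_concat h), ?_⟩
        rw [heval, hev]
        rfl

lemma algDFA_accepts (B : SyncAlg) (φ : SyncHom (freeSync α) B) (Acc : Set B.A)
    (R : Set (List α × List α))
    (hproj : projS R = φ.toFun ⁻¹' Acc) :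
    (algDFA B φ Acc R).accepts = langOf R := by
  ext l
  rw [DFA.mem_accepts]
  rcases eq_or_ne l [] with rfl | hl
  · show ((∃ b, _ ∧ b ∈ Acc) ∨ _) ↔ _
    constructor
    · rintro (⟨b, hb, -⟩ | ⟨-, hR⟩)
      · exact absurd hb (by simp [algDFA])
      · exact ⟨⟨[], [], Or.inl rfl⟩, hR⟩
    · rintro ⟨-, hR⟩
      exact Or.inr ⟨rfl, hR⟩
  · rcases algDFA_key B φ Acc R l hl with ⟨x, -, hex, hev⟩ | ⟨hwf, hev⟩
    · show (algDFA B φ Acc R).eval l ∈ _ ↔ _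
      rw [hev]
      have hmem : φ.toFun x ∈ Acc ↔ x.decode ∈ R := by
        have := Set.ext_iff.mp hproj x
        exact this.symm
      constructor
      · rintro (⟨b, hb, hbA⟩ | ⟨hb, -⟩)
        · obtain rfl : φ.toFun x = b := by
            injection hb with hb'; injection hb' with hb''
          refine ⟨by rw [← hex]; exact wf_encW x, ?_⟩
          rw [← hex, decodeW_encW]
          exact hmem.mp hbA
        · exact absurd hb (by simp)
      · rintro ⟨-, hR⟩
        refine Or.inl ⟨φ.toFun x, rfl, ?_⟩
        apply hmem.mpr
        rwa [← hex, decodeW_encW] at hR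
    · show (algDFA B φ Acc R).eval l ∈ _ ↔ _
      rw [hev]
      constructor
      · rintro (⟨b, hb, -⟩ | ⟨hb, -⟩) <;> exact absurd hb (by simp)
      · rintro ⟨hWF, -⟩
        exact absurd hWF hwf

end SyncProof

open SyncProof

/-- A relation `R ⊆ α* × α*` is synchronous (regular as a
language over the paired alphabet `Σ₂⊥`) if and only if it is recognized by a
finite synchronous algebra. -/
theorem synchronous_iff_finite_algebra (α : Type) [Finite α]
    (R : Set (List α × List α)) :
    (langOf R).IsRegular ↔
      ∃ (B : SyncAlg) (_ : Finite B.A) (φ : SyncHom (freeSync α) B)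
        (Acc : Set B.A), RecognizesRel B φ Acc R := by
  constructor
  · rintro ⟨σ, fin, M, hM⟩
    haveI := fin
    refine ⟨dfaAlg σ, inferInstanceAs (Finite (STy × (σ → σ))), dfaHom σ M,
      {p : STy × (σ → σ) | p.2 M.start ∈ M.accept}, ?_, ?_⟩
    · intro x y h
      have h' : x.2 = y.2 := h
      show x.2 M.start ∈ M.accept ↔ y.2 M.start ∈ M.accept
      rw [h']
    · ext x
      simp only [projS, Set.mem_setOf_eq, Set.mem_preimage]
      have h1 : encW x ∈ M.accepts ↔ M.eval (encW x) ∈ M.accept := DFA.mem_accepts M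
      rw [hM] at h1
      show x.decode ∈ R ↔ M.evalFrom M.start (encW x) ∈ M.accept
      constructor
      · intro hx
        exact h1.mp ⟨wf_encW x, by rwa [decodeW_encW]⟩
      · intro hx
        obtain ⟨-, h2⟩ := h1.mpr hx
        rwa [decodeW_encW] at h2
  · rintro ⟨B, finB, φ, Acc, hclosed, hproj⟩
    haveI := finB
    haveI : Fintype B.A := Fintype.ofFinite _
    exact ⟨Option (Option B.A), inferInstance, algDFA B φ Acc R,
      algDFA_accepts B φ Acc R hproj⟩
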